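/- Let (X, μ) be a measure space, let n ≥ 1 be an integer, let 0 < α < 1, and let f, g : X → ℝ be measurable functions that are strictly positive μ-almost everywhere. Assume ∫_X g^α · f^{-1/α} dμ < ∞ and ∫_X f · g^{-1} dμ = n + 1. Then (1/(n+1)) · (∫_X f^{1 - 1/α} dμ) · (∫_X g^{α-1} dμ) ≤ ∫_X g^α · f^{-1/α} dμ. -/

import Mathlib

open MeasureTheory ENNReal

private lemma rpow_combine {α a b : ℝ} (hα0 : 0 < α) (ha : 0 < a) (hb : 0 < b)
    {p q r s : ℝ} (hra : r = p * 1 + q * (-(1/α))) (hrb : s = p * (-1) + q * α) :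
    a ^ r * b ^ s = (a * b⁻¹) ^ p * (b ^ α * a ^ (-(1/α))) ^ q := by
  rw [Real.mul_rpow ha.le (inv_nonneg.2 hb.le),
    Real.mul_rpow (Real.rpow_nonneg hb.le _) (Real.rpow_nonneg ha.le _),
    ← Real.rpow_mul hb.le, ← Real.rpow_mul ha.le, Real.inv_rpow hb.le,
    ← Real.rpow_neg hb.le, hra, hrb,
    show p * 1 + q * (-(1/α)) = p + -(1/α) * q by ring,
    show p * (-1) + q * α = -p + α * q by ring,
    Real.rpow_add ha, Real.rpow_add hb]
  ring

private lemma hoelder_step {X : Type*} [MeasurableSpace X] (μ : Measure X)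
    {U V : X → ℝ≥0∞} (hU : AEMeasurable U μ) (hV : AEMeasurable V μ)
    {θ η : ℝ} (hθ : 0 < θ) (hη : 0 < η) (hsum : θ + η = 1) :
    ∫⁻ x, U x ^ θ * V x ^ η ∂μ ≤ (∫⁻ x, U x ∂μ) ^ θ * (∫⁻ x, V x ∂μ) ^ η := by
  have hθ1 : θ < 1 := by linarith
  have hpq : (1/θ).HolderConjugate (1/η) := by
    rw [Real.holderConjugate_iff]; constructor
    · rw [lt_div_iff₀ hθ]; linarith
    · simp only [one_div, inv_inv]; exact hsum
  have := ENNReal.lintegral_mul_le_Lp_mul_Lq μ hpq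
    (f := fun x => U x ^ θ) (g := fun x => V x ^ η)
    (by fun_prop) (by fun_prop)
  simp only [Pi.mul_apply] at this
  calc ∫⁻ x, U x ^ θ * V x ^ η ∂μ
      ≤ (∫⁻ x, (U x ^ θ) ^ (1/θ) ∂μ) ^ (1 / (1/θ)) *
        (∫⁻ x, (V x ^ η) ^ (1/η) ∂μ) ^ (1 / (1/η)) := this
    _ = (∫⁻ x, U x ∂μ) ^ θ * (∫⁻ x, V x ∂μ) ^ η := by
        simp only [← ENNReal.rpow_mul, mul_one_div_cancel hθ.ne', mul_one_div_cancel hη.ne',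
          ENNReal.rpow_one, one_div_one_div]

theorem alphaGauss_monotonicity_core_inequality
    {X : Type*} [MeasurableSpace X] (μ : Measure X)
    (n : ℕ) (hn : 1 ≤ n)
    (α : ℝ) (hα0 : 0 < α) (hα1 : α < 1)
    (f g : X → ℝ) (hf : Measurable f) (hg : Measurable g)
    (hfpos : ∀ᵐ x ∂μ, 0 < f x) (hgpos : ∀ᵐ x ∂μ, 0 < g x)
    (h1 : ∫⁻ x, ENNReal.ofReal (g x ^ α * f x ^ (-(1/α))) ∂μ < ∞)
    (h2 : ∫⁻ x, ENNReal.ofReal (f x * (g x)⁻¹) ∂μ = (n : ℝ≥0∞) + 1) :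
    (1 / ((n : ℝ≥0∞) + 1)) * (∫⁻ x, ENNReal.ofReal (f x ^ (1 - 1/α)) ∂μ) *
      (∫⁻ x, ENNReal.ofReal (g x ^ (α - 1)) ∂μ) ≤
    ∫⁻ x, ENNReal.ofReal (g x ^ α * f x ^ (-(1/α))) ∂μ := by
  set θ : ℝ := α / (α + 1) with hθdef
  set η : ℝ := 1 / (α + 1) with hηdef
  have hα1' : (0:ℝ) < α + 1 := by linarith
  have hθ : 0 < θ := div_pos hα0 hα1'
  have hη : 0 < η := div_pos one_pos hα1'
  have hne : α + 1 ≠ 0 := hα1'.ne'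
  have hsum : θ + η = 1 := by rw [hθdef, hηdef]; field_simp
  set U : X → ℝ≥0∞ := fun x => ENNReal.ofReal (f x * (g x)⁻¹) with hUdef
  set V : X → ℝ≥0∞ := fun x => ENNReal.ofReal (g x ^ α * f x ^ (-(1/α))) with hVdef
  have hUm : AEMeasurable U μ := by rw [hUdef]; fun_prop
  have hVm : AEMeasurable V μ := by rw [hVdef]; fun_prop
  -- pointwise identities a.e.
  have hptwise : ∀ᵐ x ∂μ, ENNReal.ofReal (f x ^ (1 - 1/α)) = U x ^ θ * V x ^ η ∧
      ENNReal.ofReal (g x ^ (α - 1)) = U x ^ η * V x ^ θ := by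
    filter_upwards [hfpos, hgpos] with x hfx hgx
    have hab : 0 < f x * (g x)⁻¹ := mul_pos hfx (inv_pos.2 hgx)
    have hcd : 0 < g x ^ α * f x ^ (-(1/α)) :=
      mul_pos (Real.rpow_pos_of_pos hgx _) (Real.rpow_pos_of_pos hfx _)
    constructor
    · have h1' : f x ^ (1 - 1/α) = (f x * (g x)⁻¹) ^ θ * (g x ^ α * f x ^ (-(1/α))) ^ η := by
        have := rpow_combine hα0 hfx hgx (p := θ) (q := η)
          (r := 1 - 1/α) (s := 0) (by rw [hθdef, hηdef]; field_simp [hne]; try ring) (by rw [hθdef, hηdef]; field_simp [hne]; try ring)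
        simpa [Real.rpow_zero] using this
      rw [h1', ENNReal.ofReal_mul (Real.rpow_nonneg hab.le _),
        ← ENNReal.ofReal_rpow_of_pos hab, ← ENNReal.ofReal_rpow_of_pos hcd]
    · have h2' : g x ^ (α - 1) = (f x * (g x)⁻¹) ^ η * (g x ^ α * f x ^ (-(1/α))) ^ θ := by
        have := rpow_combine hα0 hfx hgx (p := η) (q := θ)
          (r := 0) (s := α - 1) (by rw [hθdef, hηdef]; field_simp [hne]; try ring) (by rw [hθdef, hηdef]; field_simp [hne]; try ring)
        simpa [Real.rpow_zero] using this
      rw [h2', ENNReal.ofReal_mul (Real.rpow_nonneg hab.le _),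
        ← ENNReal.ofReal_rpow_of_pos hab, ← ENNReal.ofReal_rpow_of_pos hcd]
  have hI1 : ∫⁻ x, ENNReal.ofReal (f x ^ (1 - 1/α)) ∂μ ≤
      (∫⁻ x, U x ∂μ) ^ θ * (∫⁻ x, V x ∂μ) ^ η := by
    calc ∫⁻ x, ENNReal.ofReal (f x ^ (1 - 1/α)) ∂μ = ∫⁻ x, U x ^ θ * V x ^ η ∂μ :=
          lintegral_congr_ae (hptwise.mono fun x h => h.1)
      _ ≤ _ := hoelder_step μ hUm hVm hθ hη hsum
  have hI2 : ∫⁻ x, ENNReal.ofReal (g x ^ (α - 1)) ∂μ ≤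
      (∫⁻ x, U x ∂μ) ^ η * (∫⁻ x, V x ∂μ) ^ θ := by
    calc ∫⁻ x, ENNReal.ofReal (g x ^ (α - 1)) ∂μ = ∫⁻ x, U x ^ η * V x ^ θ ∂μ :=
          lintegral_congr_ae (hptwise.mono fun x h => h.2)
      _ ≤ _ := hoelder_step μ hUm hVm hη hθ (by linarith)
  have hUint : ∫⁻ x, U x ∂μ = (n : ℝ≥0∞) + 1 := h2
  set A := ∫⁻ x, V x ∂μ with hAdef
  have hN0 : ((n : ℝ≥0∞) + 1) ≠ 0 := by simp
  have hNtop : ((n : ℝ≥0∞) + 1) ≠ ⊤ := by simp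
  calc (1 / ((n : ℝ≥0∞) + 1)) * (∫⁻ x, ENNReal.ofReal (f x ^ (1 - 1/α)) ∂μ) *
        (∫⁻ x, ENNReal.ofReal (g x ^ (α - 1)) ∂μ)
      ≤ (1 / ((n : ℝ≥0∞) + 1)) * (((n : ℝ≥0∞) + 1) ^ θ * A ^ η) *
        (((n : ℝ≥0∞) + 1) ^ η * A ^ θ) := by
        gcongr <;> [skip; skip] <;> rw [hUint] at hI1 hI2 <;> assumption
    _ = (1 / ((n : ℝ≥0∞) + 1)) *
          ((((n : ℝ≥0∞) + 1) ^ θ * ((n : ℝ≥0∞) + 1) ^ η) * (A ^ η * A ^ θ)) := by ring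
    _ = (1 / ((n : ℝ≥0∞) + 1)) * ((n : ℝ≥0∞) + 1) * A := by
        rw [← ENNReal.rpow_add _ _ hN0 hNtop,
          ← ENNReal.rpow_add_of_nonneg _ _ hη.le hθ.le, hsum, add_comm η θ, hsum,
          ENNReal.rpow_one, ENNReal.rpow_one, mul_assoc]
    _ = A := by
        rw [one_div, ENNReal.inv_mul_cancel hN0 hNtop, one_mul]
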